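/- arXiv:2402.09261 — 2 statements merged into one kernel-verified Lean document; each statement's English description precedes it below -/
import Mathlib

section
/- Let X be a complex Banach space, let T ∈ L(X) be a quasi-Fredholm operator of degree d and let F ∈ L(X) be a finite-rank operator, so that T + F is quasi-Fredholm of some degree d'. If N(T) ∩ R(T^d) is finite-dimensional, then N(T + F) ∩ R((T + F)^{d'}) is finite-dimensional. -/
noncomputable section

/-- The two-sided ideal `F₀(X)` of finite-rank operators in `L(X)`. -/
def finiteRankIdeal (X : Type*) [NormedAddCommGroup X] [NormedSpace ℂ X] :
    TwoSidedIdeal (X →L[ℂ] X) :=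
  TwoSidedIdeal.mk'
    {F : X →L[ℂ] X | FiniteDimensional ℂ (LinearMap.range ((F : X →L[ℂ] X) : X →ₗ[ℂ] X))}
    (by
      show FiniteDimensional ℂ (LinearMap.range ((0 : X →L[ℂ] X) : X →ₗ[ℂ] X))
      rw [show LinearMap.range ((0 : X →L[ℂ] X) : X →ₗ[ℂ] X) = ⊥ by ext x; simp [eq_comm]]
      infer_instance)
    (by
      intro x y hx hy
      haveI : FiniteDimensional ℂ (LinearMap.range ((x : X →L[ℂ] X) : X →ₗ[ℂ] X)) := hx
      haveI : FiniteDimensional ℂ (LinearMap.range ((y : X →L[ℂ] X) : X →ₗ[ℂ] X)) := hy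
      have hle : LinearMap.range ((x + y : X →L[ℂ] X) : X →ₗ[ℂ] X) ≤ LinearMap.range ((x : X →L[ℂ] X) : X →ₗ[ℂ] X) ⊔ LinearMap.range ((y : X →L[ℂ] X) : X →ₗ[ℂ] X) := by
        rintro z ⟨w, rfl⟩
        exact Submodule.add_mem_sup (LinearMap.mem_range_self (x : X →ₗ[ℂ] X) w) (LinearMap.mem_range_self (y : X →ₗ[ℂ] X) w)
      exact Submodule.finiteDimensional_of_le hle)
    (by
      intro x hx
      haveI : FiniteDimensional ℂ (LinearMap.range ((x : X →L[ℂ] X) : X →ₗ[ℂ] X)) := hx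
      have hle : LinearMap.range ((-x : X →L[ℂ] X) : X →ₗ[ℂ] X) ≤ LinearMap.range ((x : X →L[ℂ] X) : X →ₗ[ℂ] X) := by
        rintro z ⟨w, rfl⟩; exact ⟨-w, by simp⟩
      exact Submodule.finiteDimensional_of_le hle)
    (by
      intro x y hy
      haveI : FiniteDimensional ℂ (LinearMap.range ((y : X →L[ℂ] X) : X →ₗ[ℂ] X)) := hy
      haveI : FiniteDimensional ℂ (Submodule.map (x : X →ₗ[ℂ] X) (LinearMap.range ((y : X →L[ℂ] X) : X →ₗ[ℂ] X))) :=
        Module.Finite.map _ _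
      have hle : LinearMap.range ((x * y : X →L[ℂ] X) : X →ₗ[ℂ] X) ≤ Submodule.map (x : X →ₗ[ℂ] X) (LinearMap.range ((y : X →L[ℂ] X) : X →ₗ[ℂ] X)) := by
        rintro z ⟨w, rfl⟩; exact ⟨y w, LinearMap.mem_range_self (y : X →ₗ[ℂ] X) w, rfl⟩
      exact Submodule.finiteDimensional_of_le hle)
    (by
      intro x y hx
      haveI : FiniteDimensional ℂ (LinearMap.range ((x : X →L[ℂ] X) : X →ₗ[ℂ] X)) := hx
      have hle : LinearMap.range ((x * y : X →L[ℂ] X) : X →ₗ[ℂ] X) ≤ LinearMap.range ((x : X →L[ℂ] X) : X →ₗ[ℂ] X) := by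
        rintro z ⟨w, rfl⟩; exact ⟨y w, rfl⟩
      exact Submodule.finiteDimensional_of_le hle)

/-- Restriction of a bounded operator to an invariant subspace, as a bounded
operator on that subspace. -/
def clmRestrict {X : Type*} [NormedAddCommGroup X] [NormedSpace ℂ X]
    (T : X →L[ℂ] X) (M : Submodule ℂ X) (h : ∀ x ∈ M, T x ∈ M) : M →L[ℂ] M where
  toLinearMap := (T : X →ₗ[ℂ] X).restrict h
  cont := by
    show Continuous fun x : M => (⟨T x, h x x.2⟩ : M)
    exact Continuous.subtype_mk (T.continuous.comp continuous_subtype_val) _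

/-- The set `Δ(T)` of stable iteration indices:
`Δ(T) = {n : ∀ m ≥ n, N(T) ∩ R(T^n) ⊆ N(T) ∩ R(T^m)}`. -/
def disSet {X : Type*} [NormedAddCommGroup X] [NormedSpace ℂ X] (T : X →L[ℂ] X) : Set ℕ :=
  {n | ∀ m, n ≤ m →
    (LinearMap.ker ((T : X →L[ℂ] X) : X →ₗ[ℂ] X) ⊓ LinearMap.range ((T ^ n : X →L[ℂ] X) : X →ₗ[ℂ] X) : Submodule ℂ X) ≤
      LinearMap.ker ((T : X →L[ℂ] X) : X →ₗ[ℂ] X) ⊓ LinearMap.range ((T ^ m : X →L[ℂ] X) : X →ₗ[ℂ] X)}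

/-- `T` is quasi-Fredholm of degree `d` : `dis(T) = d` (i.e. `d` is the least element of
`Δ(T)`), `N(T) ∩ R(T^d)` is a closed complemented subspace of `X`, and `R(T) + N(T^d)` is a
closed complemented subspace of `X`. -/
def IsQuasiFredholmOfDegree {X : Type*} [NormedAddCommGroup X] [NormedSpace ℂ X]
    (T : X →L[ℂ] X) (d : ℕ) : Prop :=
  IsLeast (disSet T) d ∧
    IsClosed ((LinearMap.ker ((T : X →L[ℂ] X) : X →ₗ[ℂ] X) ⊓ LinearMap.range ((T ^ d : X →L[ℂ] X) : X →ₗ[ℂ] X) : Submodule ℂ X) : Set X) ∧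
    (LinearMap.ker ((T : X →L[ℂ] X) : X →ₗ[ℂ] X) ⊓ LinearMap.range ((T ^ d : X →L[ℂ] X) : X →ₗ[ℂ] X)).ClosedComplemented ∧
    IsClosed ((LinearMap.range ((T : X →L[ℂ] X) : X →ₗ[ℂ] X) ⊔ LinearMap.ker ((T ^ d : X →L[ℂ] X) : X →ₗ[ℂ] X) : Submodule ℂ X) : Set X) ∧
    (LinearMap.range ((T : X →L[ℂ] X) : X →ₗ[ℂ] X) ⊔ LinearMap.ker ((T ^ d : X →L[ℂ] X) : X →ₗ[ℂ] X)).ClosedComplemented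

/-- `T` is quasi-Fredholm if it is quasi-Fredholm of some degree `d`. -/
def IsQuasiFredholm {X : Type*} [NormedAddCommGroup X] [NormedSpace ℂ X]
    (T : X →L[ℂ] X) : Prop :=
  ∃ d : ℕ, IsQuasiFredholmOfDegree T d

/-- Left semi-Fredholm: closed range, finite-dimensional kernel, and range complemented
(i.e. the range of a bounded projection). -/
def IsLeftSemiFredholm {Y : Type*} [NormedAddCommGroup Y] [NormedSpace ℂ Y]
    (S : Y →L[ℂ] Y) : Prop :=
  IsClosed ((LinearMap.range ((S : Y →L[ℂ] Y) : Y →ₗ[ℂ] Y) : Submodule ℂ Y) : Set Y) ∧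
    FiniteDimensional ℂ (LinearMap.ker ((S : Y →L[ℂ] Y) : Y →ₗ[ℂ] Y)) ∧ (LinearMap.range ((S : Y →L[ℂ] Y) : Y →ₗ[ℂ] Y)).ClosedComplemented

/-- Right semi-Fredholm: closed range of finite codimension, and kernel complemented
(i.e. the range of a bounded projection). -/
def IsRightSemiFredholm {Y : Type*} [NormedAddCommGroup Y] [NormedSpace ℂ Y]
    (S : Y →L[ℂ] Y) : Prop :=
  IsClosed ((LinearMap.range ((S : Y →L[ℂ] Y) : Y →ₗ[ℂ] Y) : Submodule ℂ Y) : Set Y) ∧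
    FiniteDimensional ℂ (Y ⧸ LinearMap.range ((S : Y →L[ℂ] Y) : Y →ₗ[ℂ] Y)) ∧ (LinearMap.ker ((S : Y →L[ℂ] Y) : Y →ₗ[ℂ] Y)).ClosedComplemented

/-- Fredholm: closed range, finite-dimensional kernel, range of finite codimension. -/
def IsFredholmOp {Y : Type*} [NormedAddCommGroup Y] [NormedSpace ℂ Y]
    (S : Y →L[ℂ] Y) : Prop :=
  IsClosed ((LinearMap.range ((S : Y →L[ℂ] Y) : Y →ₗ[ℂ] Y) : Submodule ℂ Y) : Set Y) ∧
    FiniteDimensional ℂ (LinearMap.ker ((S : Y →L[ℂ] Y) : Y →ₗ[ℂ] Y)) ∧ FiniteDimensional ℂ (Y ⧸ LinearMap.range ((S : Y →L[ℂ] Y) : Y →ₗ[ℂ] Y))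

/-- Regular operator: kernel and range are complemented (closed) subspaces. -/
def IsRegularOp {Y : Type*} [NormedAddCommGroup Y] [NormedSpace ℂ Y]
    (S : Y →L[ℂ] Y) : Prop :=
  (LinearMap.ker ((S : Y →L[ℂ] Y) : Y →ₗ[ℂ] Y)).ClosedComplemented ∧ (LinearMap.range ((S : Y →L[ℂ] Y) : Y →ₗ[ℂ] Y)).ClosedComplemented

lemma range_pow_invariant {X : Type*} [NormedAddCommGroup X] [NormedSpace ℂ X]
    (T : X →L[ℂ] X) (n : ℕ) :
    ∀ x ∈ LinearMap.range ((T ^ n : X →L[ℂ] X) : X →ₗ[ℂ] X), T x ∈ LinearMap.range ((T ^ n : X →L[ℂ] X) : X →ₗ[ℂ] X) := by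
  rintro x ⟨y, rfl⟩
  exact ⟨T y, by
    simp only [ContinuousLinearMap.coe_coe]
    rw [← ContinuousLinearMap.mul_apply, ← ContinuousLinearMap.mul_apply, ← pow_succ,
      ← pow_succ']⟩

/-- B-Fredholm: for some `n`, `R(T^n)` is closed and the restriction of `T` to `R(T^n)`,
viewed as an operator from `R(T^n)` to `R(T^n)`, is a Fredholm operator. -/
def IsBFredholm {X : Type*} [NormedAddCommGroup X] [NormedSpace ℂ X]
    (T : X →L[ℂ] X) : Prop :=
  ∃ n : ℕ, IsClosed ((LinearMap.range ((T ^ n : X →L[ℂ] X) : X →ₗ[ℂ] X) : Submodule ℂ X) : Set X) ∧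
    IsFredholmOp (clmRestrict T (LinearMap.range ((T ^ n : X →L[ℂ] X) : X →ₗ[ℂ] X)) (range_pow_invariant T n))

/-- Left Drazin invertible element of a unital ring: there is an idempotent `p`
commuting with `a` such that `a * p` is nilpotent and `a + p` has a left inverse
commuting with `p`. -/
def IsLeftDrazinInvertible {A : Type*} [Ring A] (a : A) : Prop :=
  ∃ p : A, IsIdempotentElem p ∧ a * p = p * a ∧ IsNilpotent (a * p) ∧
    ∃ b : A, b * (a + p) = 1 ∧ b * p = p * b

/-- Right Drazin invertible element of a unital ring: there is an idempotent `p`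
commuting with `a` such that `a * p` is nilpotent and `a + p` has a right inverse
commuting with `p`. -/
def IsRightDrazinInvertible {A : Type*} [Ring A] (a : A) : Prop :=
  ∃ p : A, IsIdempotentElem p ∧ a * p = p * a ∧ IsNilpotent (a * p) ∧
    ∃ b : A, (a + p) * b = 1 ∧ b * p = p * b

/-- Drazin invertible element of a unital ring: there is an idempotent `p`
commuting with `a` such that `a * p` is nilpotent and `a + p` is invertible. -/
def IsDrazinInvertible {A : Type*} [Ring A] (a : A) : Prop :=
  ∃ p : A, IsIdempotentElem p ∧ a * p = p * a ∧ IsNilpotent (a * p) ∧ IsUnit (a + p)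

end


/-- If the image of `W` under `f` is finite-dimensional and `W ⊓ ker f` is
finite-dimensional, then `W` is finite-dimensional. -/
lemma findim_of_map_ker' {X Y : Type*} [AddCommGroup X] [Module ℂ X]
    [AddCommGroup Y] [Module ℂ Y]
    (W : Submodule ℂ X) (f : X →ₗ[ℂ] Y)
    (h1 : FiniteDimensional ℂ (W.map f))
    (h2 : FiniteDimensional ℂ (W ⊓ LinearMap.ker f : Submodule ℂ X)) :
    FiniteDimensional ℂ W := by
  let g := f.domRestrict W
  have hk : LinearMap.ker g = Submodule.comap W.subtype (W ⊓ LinearMap.ker f) := by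
    ext x
    simp [g, LinearMap.mem_ker, x.2]
  haveI hker : FiniteDimensional ℂ (LinearMap.ker g) := by
    rw [hk]
    exact (Submodule.comapSubtypeEquivOfLe
      (inf_le_left : W ⊓ LinearMap.ker f ≤ W)).symm.finiteDimensional
  haveI hrange : FiniteDimensional ℂ (LinearMap.range g) := by
    rw [LinearMap.range_domRestrict]
    exact h1
  haveI : FiniteDimensional ℂ (W ⧸ LinearMap.ker g) :=
    g.quotKerEquivRange.symm.finiteDimensional
  exact IsNoetherian.iff_fg.mp <|
    (isNoetherian_iff_submodule_quotient (LinearMap.ker g)).mpr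
      ⟨IsNoetherian.iff_fg.mpr hker, IsNoetherian.iff_fg.mpr ‹_›⟩


/-- If `T` is quasi-Fredholm of degree `d`, `F` has finite rank and `T + F` is
quasi-Fredholm of degree `d'`, then finite-dimensionality of `N(T) ∩ R(T^d)` implies
finite-dimensionality of `N(T+F) ∩ R((T+F)^{d'})`. -/
theorem finiteDim_kernel_inter_range_perturbation
    (X : Type*) [NormedAddCommGroup X] [NormedSpace ℂ X] [CompleteSpace X]
    (T F : X →L[ℂ] X) (d d' : ℕ)
    (hT : IsQuasiFredholmOfDegree T d)
    (hF : FiniteDimensional ℂ (LinearMap.range ((F : X →L[ℂ] X) : X →ₗ[ℂ] X)))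
    (hTF : IsQuasiFredholmOfDegree (T + F) d')
    (hfin : FiniteDimensional ℂ
      (LinearMap.ker ((T : X →L[ℂ] X) : X →ₗ[ℂ] X) ⊓ LinearMap.range ((T ^ d : X →L[ℂ] X) : X →ₗ[ℂ] X) : Submodule ℂ X)) :
    FiniteDimensional ℂ
      (LinearMap.ker ((T + F : X →L[ℂ] X) : X →ₗ[ℂ] X) ⊓ LinearMap.range (((T + F) ^ d' : X →L[ℂ] X) : X →ₗ[ℂ] X) : Submodule ℂ X) := by
    classical
  set S := T + F with hSdef
  set m := max d d' with hmdef
  have hmono : (LinearMap.ker (S : X →ₗ[ℂ] X) ⊓ LinearMap.range ((S ^ d' : X →L[ℂ] X) : X →ₗ[ℂ] X) : Submodule ℂ X) ≤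
      LinearMap.ker (S : X →ₗ[ℂ] X) ⊓ LinearMap.range ((S ^ m : X →L[ℂ] X) : X →ₗ[ℂ] X) := hTF.1.1 m (le_max_right d d')
  -- G := S^m - T^m has finite rank
  have hFmem : F ∈ finiteRankIdeal X := by
    rw [finiteRankIdeal, TwoSidedIdeal.mem_mk']
    exact hF
  have key : ∀ n : ℕ, (T + F) ^ n - T ^ n ∈ finiteRankIdeal X := by
    intro n
    induction n with
    | zero => simpa using (finiteRankIdeal X).zero_mem
    | succ n ih =>
      have hrw : (T + F) ^ (n + 1) - T ^ (n + 1)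
          = ((T + F) ^ n - T ^ n) * (T + F) + T ^ n * F := by
        rw [pow_succ, pow_succ]
        noncomm_ring
      rw [hrw]
      exact (finiteRankIdeal X).add_mem
        ((finiteRankIdeal X).mul_mem_right _ _ ih)
        ((finiteRankIdeal X).mul_mem_left _ _ hFmem)
  set G : X →L[ℂ] X := S ^ m - T ^ m with hGdef
  have hGfin : FiniteDimensional ℂ (LinearMap.range (G : X →ₗ[ℂ] X)) := by
    have h := key m
    rw [finiteRankIdeal, TwoSidedIdeal.mem_mk'] at h
    exact h
  have hSm : ∀ x : X, (S ^ m) x = (T ^ m) x + G x := by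
    intro x
    simp [hGdef]
  have hrange_le : (LinearMap.range ((T ^ m : X →L[ℂ] X) : X →ₗ[ℂ] X) : Submodule ℂ X) ≤ LinearMap.range ((T ^ d : X →L[ℂ] X) : X →ₗ[ℂ] X) := by
    rintro x ⟨y, rfl⟩
    refine ⟨(T ^ (m - d)) y, ?_⟩
    have hdm : d + (m - d) = m := by omega
    simp only [ContinuousLinearMap.coe_coe]
    rw [← ContinuousLinearMap.mul_apply, ← pow_add, hdm]
  set R : Submodule ℂ X := LinearMap.range ((T ^ m : X →L[ℂ] X) : X →ₗ[ℂ] X) with hRdef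
  set W₂ : Submodule ℂ X := LinearMap.ker (T : X →ₗ[ℂ] X) ⊓ (R ⊔ LinearMap.range (G : X →ₗ[ℂ] X)) with hW₂def
  haveI hW₂fin : FiniteDimensional ℂ W₂ := by
    apply findim_of_map_ker' W₂ R.mkQ
    · haveI := hGfin
      haveI : FiniteDimensional ℂ ((LinearMap.range (G : X →ₗ[ℂ] X)).map R.mkQ) :=
        Module.Finite.map _ _
      refine Submodule.finiteDimensional_of_le
        (?_ : W₂.map R.mkQ ≤ (LinearMap.range (G : X →ₗ[ℂ] X)).map R.mkQ)
      rintro z ⟨x, hx, rfl⟩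
      obtain ⟨r, hr, g, hg, rfl⟩ := Submodule.mem_sup.mp hx.2
      refine ⟨g, hg, ?_⟩
      have h0 : R.mkQ r = 0 := by
        simpa [Submodule.mkQ_apply] using (Submodule.Quotient.mk_eq_zero R).mpr hr
      rw [map_add, h0, zero_add]
    · rw [Submodule.ker_mkQ]
      haveI := hfin
      have hle : W₂ ⊓ R ≤ LinearMap.ker (T : X →ₗ[ℂ] X) ⊓ LinearMap.range ((T ^ d : X →L[ℂ] X) : X →ₗ[ℂ] X) :=
        fun x hx => ⟨hx.1.1, hrange_le hx.2⟩
      exact Submodule.finiteDimensional_of_le hle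
  haveI hWfin : FiniteDimensional ℂ
      (LinearMap.ker (S : X →ₗ[ℂ] X) ⊓ LinearMap.range ((S ^ m : X →L[ℂ] X) : X →ₗ[ℂ] X) : Submodule ℂ X) := by
    apply findim_of_map_ker' _ (F : X →ₗ[ℂ] X)
    · haveI := hF
      refine Submodule.finiteDimensional_of_le
        (?_ : _ ≤ (LinearMap.range (F : X →ₗ[ℂ] X) : Submodule ℂ X))
      rintro z ⟨x, _, rfl⟩
      exact ⟨x, rfl⟩
    · haveI := hW₂fin
      refine Submodule.finiteDimensional_of_le (?_ : _ ≤ W₂)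
      rintro x ⟨⟨hker, hrange⟩, hkF⟩
      have hFx : F x = 0 := hkF
      have hSx : S x = 0 := hker
      have hTx : T x = 0 := by
        have h1 : T x + F x = 0 := by
          simpa [hSdef] using hSx
        simpa [hFx] using h1
      refine ⟨hTx, ?_⟩
      obtain ⟨y, hy⟩ := hrange
      exact Submodule.mem_sup.mpr ⟨(T ^ m) y, ⟨y, rfl⟩, G y, ⟨y, rfl⟩, by rw [← hSm]; exact hy⟩
  exact Submodule.finiteDimensional_of_le hmono
end

section
/- Let X be a complex Banach space and let A ∈ L(X) be such that A² − A is a finite-rank operator (i.e., the image of A in C₀(X) = L(X)/F₀(X) is an idempotent). Then there exists an idempotent P ∈ L(X) (P² = P) such that P − A is a finite-rank operator, i.e., every idempotent element of C₀(X) lifts to an idempotent of L(X). -/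
/-- Every idempotent of `C₀(X) = L(X)/F₀(X)` lifts to an idempotent of
`L(X)`: if `A² - A` has finite rank then there is an idempotent `P ∈ L(X)` with `P - A`
of finite rank. -/
theorem idempotent_lifts_mod_finiteRank
    (X : Type*) [NormedAddCommGroup X] [NormedSpace ℂ X] [CompleteSpace X]
    (A : X →L[ℂ] X) (h : FiniteDimensional ℂ (LinearMap.range ((A * A - A : X →L[ℂ] X) : X →ₗ[ℂ] X))) :
    ∃ P : X →L[ℂ] X, P * P = P ∧ FiniteDimensional ℂ (LinearMap.range ((P - A : X →L[ℂ] X) : X →ₗ[ℂ] X)) := by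
  set N : Submodule ℂ X := LinearMap.range ((A * A - A : X →L[ℂ] X) : X →ₗ[ℂ] X) with hN
  haveI : FiniteDimensional ℂ N := h
  have hinv : ∀ x ∈ N, A x ∈ N := by
    rintro x ⟨y, rfl⟩
    exact ⟨A y, by simp [ContinuousLinearMap.mul_apply, map_sub]⟩
  obtain ⟨f, hf⟩ := (Submodule.ClosedComplemented.of_finiteDimensional N : N.ClosedComplemented)
  set Q : X →L[ℂ] X := N.subtypeL.comp f with hQdef
  have hQmem : ∀ x, Q x ∈ N := fun x => (f x).2
  have hQfix : ∀ x ∈ N, Q x = x := fun x hx => congrArg Subtype.val (hf ⟨x, hx⟩)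
  set R : X →L[ℂ] X := 1 - Q with hRdef
  have hR' : ∀ z, R z = z - Q z := fun z => by simp [hRdef]
  have hRkill : ∀ x ∈ N, R x = 0 := by
    intro x hx
    rw [hR', hQfix x hx, sub_self]
  have hRR : ∀ z, R (R z) = R z := by
    intro z
    have hq : Q (Q z) = Q z := hQfix _ (hQmem z)
    rw [hR', hR' z, map_sub, hq, sub_self, sub_zero]
  have hFmem : ∀ x, A (A x) - A x ∈ N := fun x => ⟨x, by simp [ContinuousLinearMap.mul_apply]⟩
  refine ⟨R * A * R, ?_, ?_⟩
  · ext x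
    simp only [ContinuousLinearMap.mul_apply]
    rw [hRR]
    set y := R x with hy
    have key : A (R (A y)) - A y ∈ N := by
      have h1 : A (R (A y)) - A y = (A (A y) - A y) - A (Q (A y)) := by
        rw [hR' (A y), map_sub]; abel
      rw [h1]
      exact N.sub_mem (hFmem y) (hinv _ (hQmem (A y)))
    have h0 : R (A (R (A y))) - R (A y) = 0 := by
      rw [← map_sub]; exact hRkill _ key
    exact sub_eq_zero.mp h0
  · have hle : LinearMap.range ((R * A * R - A : X →L[ℂ] X) : X →ₗ[ℂ] X) ≤ N := by
      rintro z ⟨x, rfl⟩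
      simp only [ContinuousLinearMap.coe_coe, ContinuousLinearMap.sub_apply, ContinuousLinearMap.mul_apply]
      have hx : A x = A (R x) + A (Q x) := by
        rw [← map_add]; congr 1; rw [hR']; abel
      rw [hx, hR' (A (R x))]
      have heq : A (R x) - Q (A (R x)) - (A (R x) + A (Q x))
          = -(Q (A (R x))) - A (Q x) := by abel
      rw [heq]
      exact N.sub_mem (N.neg_mem (hQmem _)) (hinv _ (hQmem x))
    exact Submodule.finiteDimensional_of_le hle
end
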